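/- arXiv:1612.08930 — 2 statements merged into one kernel-verified Lean document; each statement's English description precedes it below -/
import Mathlib

section
/- Let (R_n)_{n≥0} be a cyclic urn process with m types started with one ball of type 0. For every n ≥ 0 and every k ∈ {0,…,m−1} with 2k ≠ m, E[u_k(R_n)] = Γ(n+1+ω^k)/(Γ(n+1)·Γ(1+ω^k)). If m is even, then E[u_{m/2}(R_n)] = 0 for every n ≥ 1. -/
open MeasureTheory ProbabilityTheory Filter Complex Finset Topology

noncomputable section

/-- `ω = exp(2πi/m)`, the `m`-th elementary root of unity. -/
def cw (m : ℕ) : ℂ := Complex.exp (2 * Real.pi * Complex.I / m)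

/-- `λ_k = cos(2πk/m)`. -/
def lam (m k : ℕ) : ℝ := Real.cos (2 * Real.pi * k / m)

/-- `μ_k = sin(2πk/m)`. -/
def muim (m k : ℕ) : ℝ := Real.sin (2 * Real.pi * k / m)

/-- the eigenvector `v_k = (1/m)(1, ω^{-k}, …, ω^{-(m-1)k})`. -/
def vvec (m k : ℕ) : Fin m → ℂ :=
  fun t => (m : ℂ)⁻¹ * cw m ^ (-((k * (t : ℕ) : ℕ) : ℤ))

/-- the dual coefficient `u_k(w) = ∑_t ω^{kt} w_t`. -/
def ucoef (m k : ℕ) (w : Fin m → ℝ) : ℂ :=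
  ∑ t : Fin m, cw m ^ (k * (t : ℕ)) * (w t : ℂ)

/-- the replacement matrix `A` of the cyclic urn. -/
def repA (m : ℕ) : Matrix (Fin m) (Fin m) ℝ :=
  Matrix.of fun i j => if (j : ℕ) = ((i : ℕ) + 1) % m then 1 else 0

/-- the filtration `𝓕_n = σ(R_0, …, R_n)`. -/
def urnFilt {Ω : Type*} [MeasurableSpace Ω] (m : ℕ) (R : ℕ → Ω → Fin m → ℝ) (n : ℕ) :
    MeasurableSpace Ω :=
  ⨆ i ∈ Finset.range (n + 1), MeasurableSpace.comap (R i) inferInstance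

/-- A cyclic urn process with `m` types started with one ball of type `j0`. -/
structure IsCyclicUrn {Ω : Type*} [MeasurableSpace Ω] (μ : Measure Ω) (m : ℕ) (j0 : Fin m)
    (R : ℕ → Ω → Fin m → ℝ) : Prop where
  isProb : IsProbabilityMeasure μ
  meas : ∀ n, Measurable (R n)
  natVal : ∀ n ω i, ∃ z : ℕ, R n ω i = z
  init : ∀ ω, R 0 ω = fun i => if i = j0 then 1 else 0
  step : ∀ n, ∀ j : Fin m,
    μ[Set.indicator {ω | R (n + 1) ω =
        fun i => R n ω i + if (i : ℕ) = ((j : ℕ) + 1) % m then 1 else 0}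
      (fun _ => (1 : ℝ)) | urnFilt m R n]
      =ᵐ[μ] fun ω => R n ω j / (n + 1)

/-- componentwise expectation `E[X]` of a random vector. -/
def expVec {Ω : Type*} [MeasurableSpace Ω] (μ : Measure Ω) {m : ℕ}
    (X : Ω → Fin m → ℝ) : Fin m → ℝ := fun i => ∫ ω, X ω i ∂μ

/-- the martingale `M_{k,n} = (Γ(n+1)/Γ(n+1+ω^k)) u_k(R_n - E[R_n])`, with `M_{k,0} = 0`. -/
def Mart {Ω : Type*} [MeasurableSpace Ω] (μ : Measure Ω) (m k : ℕ)
    (R : ℕ → Ω → Fin m → ℝ) (n : ℕ) (ω : Ω) : ℂ :=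
  if n = 0 then 0
  else (Complex.Gamma ((n : ℂ) + 1) / Complex.Gamma ((n : ℂ) + 1 + cw m ^ k)) *
    ucoef m k (fun t => R n ω t - expVec μ (R n) t)

/-- `ν` is the centered Gaussian distribution `𝒩(0, S)` on `ℝ^d` (Cramér–Wold
characterization: every linear functional is one-dimensional centered Gaussian). -/
def IsCenteredGaussian {d : ℕ} (ν : Measure (Fin d → ℝ)) (S : Matrix (Fin d) (Fin d) ℝ) : Prop :=
  IsProbabilityMeasure ν ∧
  ∀ l : Fin d → ℝ,
    ν.map (fun x => ∑ i, l i * x i) =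
      gaussianReal 0 (Real.toNNReal (∑ i, ∑ j, l i * S i j * l j))

/-- convergence in distribution of the random vectors `X_n` to the law `ν`. -/
def TendstoInDist {Ω : Type*} [MeasurableSpace Ω] (μ : Measure Ω) {d : ℕ}
    (X : ℕ → Ω → Fin d → ℝ) (ν : Measure (Fin d → ℝ)) : Prop :=
  ∀ f : BoundedContinuousFunction (Fin d → ℝ) ℝ,
    Tendsto (fun n => ∫ ω, f (X n ω) ∂μ) atTop (𝓝 (∫ x, f x ∂ν))


lemma cw_pow_m {m : ℕ} (hm : m ≠ 0) : cw m ^ m = 1 := by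
  rw [cw, ← Complex.exp_nat_mul]
  have hm' : (m : ℂ) ≠ 0 := Nat.cast_ne_zero.mpr hm
  rw [mul_div_cancel₀ _ hm', Complex.exp_two_pi_mul_I]

lemma cw_pow_mod {m : ℕ} (hm : m ≠ 0) (a : ℕ) : cw m ^ a = cw m ^ (a % m) := by
  conv_lhs => rw [← Nat.div_add_mod a m]
  rw [pow_add, pow_mul, cw_pow_m hm, one_pow, one_mul]

lemma cw_pow_dvd {m : ℕ} (hm : m ≠ 0) {a : ℕ} (h : cw m ^ a = 1) : m ∣ a := by
  rw [cw, ← Complex.exp_nat_mul, Complex.exp_eq_one_iff] at h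
  obtain ⟨t, ht⟩ := h
  have hm' : (m : ℂ) ≠ 0 := Nat.cast_ne_zero.mpr hm
  have h2 : (a : ℂ) * (2 * Real.pi * Complex.I) = ((t * m : ℤ) : ℂ) * (2 * Real.pi * Complex.I) := by
    push_cast
    field_simp at ht
    linear_combination (2 * Real.pi * Complex.I) * ht
  have h3 : (a : ℂ) = ((t * m : ℤ) : ℂ) :=
    mul_right_cancel₀ Complex.two_pi_I_ne_zero h2
  have h4 : (a : ℤ) = t * m := by exact_mod_cast h3
  exact Int.natCast_dvd_natCast.mp ⟨t, by rw [h4, mul_comm]⟩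

lemma cw_abs (m : ℕ) (hm : m ≠ 0) : ‖cw m‖ = 1 := by
  have : (2 * Real.pi * Complex.I / m) = ((2 * Real.pi / m : ℝ) : ℂ) * Complex.I := by
    push_cast; ring
  rw [cw, this, Complex.norm_exp_ofReal_mul_I]

lemma cw_ne_neg_one {m : ℕ} (hm : 2 ≤ m) {k : ℕ} (hk : k < m) (h2k : 2 * k ≠ m) :
    cw m ^ k ≠ -1 := by
  intro h
  have hm0 : m ≠ 0 := by omega
  have h1 : cw m ^ (2 * k) = 1 := by
    rw [two_mul, pow_add, h]; ring
  have := cw_pow_dvd hm0 h1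
  obtain ⟨c, hc⟩ := this
  match c, hc with
  | 0, hc => 
    have hk0 : k = 0 := by omega
    rw [hk0, pow_zero] at h
    norm_num at h
  | 1, hc => omega
  | (c+2), hc =>
    have h5 : m * 2 ≤ m * (c + 2) := Nat.mul_le_mul_left m (by omega)
    have h6 : m * 1 = m := by ring
    nlinarith [hk, hc, h5]

lemma cwk_sum_ne {m : ℕ} (hm : 2 ≤ m) {k : ℕ} (hk : k < m) (h2k : 2 * k ≠ m) (i : ℕ) :
    (i : ℂ) + 1 + cw m ^ k ≠ 0 := by
  intro h
  have habs : ‖cw m ^ k‖ = 1 := by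
    rw [norm_pow, cw_abs m (by omega), one_pow]
  have hcw : cw m ^ k = -((i : ℂ) + 1) := by linear_combination h
  rw [hcw] at habs
  have : ‖-((i : ℂ) + 1)‖ = (i : ℝ) + 1 := by
    rw [show -((i:ℂ)+1) = (((-(i:ℝ)-1 : ℝ)) : ℂ) by push_cast; ring, Complex.norm_real, Real.norm_eq_abs]
    have h0 : (0:ℝ) ≤ (i:ℝ) := Nat.cast_nonneg i
    rw [abs_of_nonpos (by linarith)]
    ring
  rw [this] at habs
  have hi : i = 0 := by
    have : (i : ℝ) = 0 := by linarith
    exact_mod_cast this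
  subst hi
  have : cw m ^ k = -1 := by rw [hcw]; norm_num
  exact cw_ne_neg_one hm hk h2k this

lemma cw_half {m : ℕ} (hm : 2 ≤ m) (h2 : 2 ∣ m) : cw m ^ (m / 2) = -1 := by
  obtain ⟨c, rfl⟩ := h2
  have hc : c ≠ 0 := by omega
  have hc' : (c : ℂ) ≠ 0 := Nat.cast_ne_zero.mpr hc
  rw [Nat.mul_div_cancel_left c (by norm_num), cw, ← Complex.exp_nat_mul,
    ← Complex.exp_pi_mul_I]
  congr 1
  push_cast
  field_simp

lemma gamma_prod (z : ℂ) (hz : ∀ i : ℕ, (i : ℂ) + 1 + z ≠ 0) (n : ℕ) :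
    Complex.Gamma ((n : ℂ) + 1 + z) =
      Complex.Gamma (1 + z) * ∏ i ∈ Finset.range n, ((i : ℂ) + 1 + z) := by
  induction n with
  | zero => simp
  | succ n ih =>
    have h1 : ((n + 1 : ℕ) : ℂ) + 1 + z = ((n : ℂ) + 1 + z) + 1 := by push_cast; ring
    rw [h1, Complex.Gamma_add_one _ (hz n), ih, Finset.prod_range_succ]; ring

/-! new defs -/

def evec (m : ℕ) (j : Fin m) : Fin m → ℝ := fun i => if (i : ℕ) = ((j : ℕ) + 1) % m then 1 else 0

def Aset {Ω : Type*} (m : ℕ) (R : ℕ → Ω → Fin m → ℝ) (n : ℕ) (j : Fin m) : Set Ω :=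
  {ω | R (n + 1) ω = fun i => R n ω i + evec m j i}

section UrnLemmas

variable {Ω : Type*} [MeasurableSpace Ω] {μ : Measure Ω} {m : ℕ} {j0 : Fin m}
  {R : ℕ → Ω → Fin m → ℝ}

lemma measR (hR : IsCyclicUrn μ m j0 R) (n : ℕ) (t : Fin m) :
    Measurable fun ω => R n ω t :=
  (measurable_pi_apply t).comp (hR.meas n)

lemma nonnegR (hR : IsCyclicUrn μ m j0 R) (n : ℕ) (ω : Ω) (i : Fin m) : 0 ≤ R n ω i := by
  obtain ⟨z, hz⟩ := hR.natVal n ω i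
  rw [hz]; positivity

lemma measAset (hR : IsCyclicUrn μ m j0 R) (n : ℕ) (j : Fin m) :
    MeasurableSet (Aset m R n j) := by
  have heq : Aset m R n j = ⋂ i, {ω | R (n + 1) ω i = R n ω i + evec m j i} := by
    ext ω; simp [Aset, funext_iff, Set.mem_iInter]
  rw [heq]
  exact MeasurableSet.iInter fun i =>
    measurableSet_eq_fun (measR hR _ i) ((measR hR _ i).add_const _)

lemma mod_succ_inj {j j' : Fin m} (h : ((j : ℕ) + 1) % m = ((j' : ℕ) + 1) % m) : j = j' := by
  have hj := j.isLt; have hj' := j'.isLt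
  apply Fin.ext
  by_cases c1 : (j : ℕ) + 1 = m <;> by_cases c2 : (j' : ℕ) + 1 = m
  · omega
  · rw [c1, Nat.mod_self, Nat.mod_eq_of_lt (by omega)] at h; omega
  · rw [c2, Nat.mod_self, Nat.mod_eq_of_lt (by omega)] at h; omega
  · rw [Nat.mod_eq_of_lt (by omega), Nat.mod_eq_of_lt (by omega)] at h; omega

lemma disjAset (n : ℕ) : Pairwise (Function.onFun Disjoint fun j : Fin m => Aset m R n j) := by
  intro j j' hjj
  rw [Function.onFun, Set.disjoint_left]
  intro ω hω hω'
  have hω2 : R (n + 1) ω = fun i => R n ω i + evec m j i := hω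
  have hω2' : R (n + 1) ω = fun i => R n ω i + evec m j' i := hω'
  have hmpos : 0 < m := j.pos
  have hkey := congrFun (hω2.symm.trans hω2') ⟨((j : ℕ) + 1) % m, Nat.mod_lt _ hmpos⟩
  simp only [evec] at hkey
  by_cases hc : ((j : ℕ) + 1) % m = ((j' : ℕ) + 1) % m
  · exact hjj (mod_succ_inj hc)
  · simp [hc] at hkey

lemma urnFilt_le {inst : MeasurableSpace Ω} (hmeas : ∀ i, Measurable (R i)) (n : ℕ) :
    urnFilt m R n ≤ inst := by
  rw [urnFilt]
  exact iSup_le fun i => iSup_le fun _ => (hmeas i).comap_le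

lemma integral_indic (hR : IsCyclicUrn μ m j0 R) (n : ℕ) (j : Fin m) :
    ∫ ω, (Aset m R n j).indicator (fun _ => (1 : ℝ)) ω ∂μ = (∫ ω, R n ω j ∂μ) / (n + 1) := by
  haveI := hR.isProb
  have hle := urnFilt_le hR.meas (m := m) (R := R) n
  have hstep := hR.step n j
  have hset : {ω | R (n + 1) ω =
      fun i => R n ω i + if (i : ℕ) = ((j : ℕ) + 1) % m then 1 else 0} = Aset m R n j := rfl
  rw [hset] at hstep
  calc ∫ ω, (Aset m R n j).indicator (fun _ => (1 : ℝ)) ω ∂μ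
      = ∫ ω, (μ[(Aset m R n j).indicator (fun _ => (1 : ℝ)) | urnFilt m R n]) ω ∂μ :=
        (integral_condExp hle).symm
    _ = ∫ ω, R n ω j / (n + 1) ∂μ := integral_congr_ae hstep
    _ = (∫ ω, R n ω j ∂μ) / (n + 1) := integral_div _ _

lemma meas_Aset_toReal (hR : IsCyclicUrn μ m j0 R) (n : ℕ) (j : Fin m) :
    (μ (Aset m R n j)).toReal = (∫ ω, R n ω j ∂μ) / (n + 1) := by
  have := integral_indic hR n j
  rwa [integral_indicator_const (1 : ℝ) (measAset hR n j), smul_eq_mul, mul_one] at this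

lemma intR (hR : IsCyclicUrn μ m j0 R) (n : ℕ)
    (ih : ∀ᵐ ω ∂μ, ∑ i, R n ω i = n + 1) (j : Fin m) :
    Integrable (fun ω => R n ω j) μ := by
  haveI := hR.isProb
  refine Integrable.mono' (integrable_const ((n : ℝ) + 1))
    (measR hR n j).aestronglyMeasurable ?_
  filter_upwards [ih] with ω hs
  rw [Real.norm_eq_abs, _root_.abs_of_nonneg (nonnegR hR n ω j)]
  calc R n ω j ≤ ∑ i, R n ω i :=
        Finset.single_le_sum (fun i _ => nonnegR hR n ω i) (mem_univ j)
    _ = n + 1 := hs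

lemma ae_full (hR : IsCyclicUrn μ m j0 R) (n : ℕ)
    (ih : ∀ᵐ ω ∂μ, ∑ i, R n ω i = n + 1) :
    ∀ᵐ ω ∂μ, ∃ j, ω ∈ Aset m R n j := by
  haveI := hR.isProb
  have hn1 : ((n : ℝ) + 1) ≠ 0 := by positivity
  have hEsum : ∑ j, ∫ ω, R n ω j ∂μ = (n : ℝ) + 1 := by
    rw [← integral_finset_sum _ fun j _ => intR hR n ih j]
    calc ∫ ω, ∑ j, R n ω j ∂μ = ∫ _ω, ((n : ℝ) + 1) ∂μ := integral_congr_ae (ih.mono fun ω h => h)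
      _ = (n : ℝ) + 1 := by simp
  have hsum' : ∑ j, (μ (Aset m R n j)).toReal = 1 := by
    simp_rw [meas_Aset_toReal hR n]
    rw [← Finset.sum_div, hEsum, div_self hn1]
  have hU : μ (⋃ j, Aset m R n j) = 1 := by
    rw [measure_iUnion (disjAset n) (fun j => measAset hR n j), tsum_fintype]
    rw [← ENNReal.toReal_eq_one_iff]
    rw [ENNReal.toReal_sum fun j _ => measure_ne_top μ _]
    exact hsum'
  have hcompl : μ (⋃ j, Aset m R n j)ᶜ = 0 := by
    rw [measure_compl (MeasurableSet.iUnion fun j => measAset hR n j) (measure_ne_top μ _), hU,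
      measure_univ, tsub_self]
  have heq : {ω | ¬ ∃ j, ω ∈ Aset m R n j} = (⋃ j, Aset m R n j)ᶜ := by
    ext ω; simp
  rw [ae_iff, heq]
  exact hcompl

lemma sum_evec (hm : 0 < m) (j : Fin m) : ∑ i, evec m j i = 1 := by
  have : ∀ i : Fin m, evec m j i = if i = (⟨((j : ℕ) + 1) % m, Nat.mod_lt _ hm⟩ : Fin m)
      then (1 : ℝ) else 0 := by
    intro i; simp only [evec, Fin.ext_iff]
  simp_rw [this]
  simp

lemma sum_ae (hR : IsCyclicUrn μ m j0 R) : ∀ n, ∀ᵐ ω ∂μ, ∑ i, R n ω i = n + 1 := by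
  intro n
  induction n with
  | zero =>
    filter_upwards with ω
    rw [hR.init ω]
    push_cast
    simp
  | succ n ih =>
    filter_upwards [ae_full hR n ih, ih] with ω hfull hs
    obtain ⟨j, hj⟩ := hfull
    have hj' : R (n + 1) ω = fun i => R n ω i + evec m j i := hj
    rw [hj', Finset.sum_add_distrib, hs, sum_evec j0.pos j]
    push_cast
    ring

lemma En_rec (hR : IsCyclicUrn μ m j0 R) (n : ℕ)
    (ih : ∀ᵐ ω ∂μ, ∑ i, R n ω i = n + 1) (i : Fin m) :
    ∫ ω, R (n + 1) ω i ∂μ =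
      ∫ ω, R n ω i ∂μ + ∑ j, evec m j i * ((∫ ω, R n ω j ∂μ) / (n + 1)) := by
  haveI := hR.isProb
  have hae : ∀ᵐ ω ∂μ, R (n + 1) ω i
      = R n ω i + ∑ j, (Aset m R n j).indicator (fun _ => evec m j i) ω := by
    filter_upwards [ae_full hR n ih] with ω hfull
    obtain ⟨j1, hj1⟩ := hfull
    rw [Finset.sum_eq_single j1]
    · rw [Set.indicator_of_mem hj1]
      have hj1' : R (n + 1) ω = fun t => R n ω t + evec m j1 t := hj1
      rw [hj1']
    · intro b _ hb
      exact Set.indicator_of_notMem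
        (fun hmem => (Set.disjoint_left.mp (disjAset n hb) hmem) hj1) _
    · intro hb; exact absurd (mem_univ j1) hb
  rw [integral_congr_ae hae,
    integral_add (intR hR n ih i)
      (integrable_finset_sum _ fun j _ => (integrable_const (evec m j i)).indicator (measAset hR n j)),
    integral_finset_sum _ fun j _ => (integrable_const (evec m j i)).indicator (measAset hR n j)]
  congr 1
  refine Finset.sum_congr rfl fun j _ => ?_
  rw [integral_indicator_const (evec m j i) (measAset hR n j), smul_eq_mul, measureReal_def,
    meas_Aset_toReal hR n j, mul_comm]

lemma int_ucoef (hR : IsCyclicUrn μ m j0 R) (k n : ℕ)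
    (ih : ∀ᵐ ω ∂μ, ∑ i, R n ω i = n + 1) :
    ∫ ω, ucoef m k (R n ω) ∂μ
      = ∑ t : Fin m, cw m ^ (k * (t : ℕ)) * ((∫ ω, R n ω t ∂μ : ℝ) : ℂ) := by
  simp only [ucoef]
  rw [integral_finset_sum (μ := μ) Finset.univ
    (f := fun (t : Fin m) (ω : Ω) => cw m ^ (k * (t : ℕ)) * ((R n ω t : ℝ) : ℂ))
    (fun t _ => ((intR hR n ih t).ofReal.const_mul _))]
  refine Finset.sum_congr rfl fun t _ => ?_
  rw [integral_const_mul]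
  congr 1
  exact integral_ofReal

lemma key_sum {k : ℕ} (hm : 0 < m) (j : Fin m) :
    ∑ t : Fin m, cw m ^ (k * (t : ℕ)) * ((evec m j t : ℝ) : ℂ)
      = cw m ^ (k * (j : ℕ)) * cw m ^ k := by
  have hmm : m ≠ 0 := hm.ne'
  have : ∀ t : Fin m, ((evec m j t : ℝ) : ℂ)
      = if t = (⟨((j : ℕ) + 1) % m, Nat.mod_lt _ hm⟩ : Fin m) then (1 : ℂ) else 0 := by
    intro t; simp only [evec, Fin.ext_iff]
    split <;> simp
  simp_rw [this, mul_ite, mul_one, mul_zero, Finset.sum_ite_eq' Finset.univ, mem_univ, if_true]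
  -- cw m ^ (k * (((j:ℕ)+1)%m)) = cw m ^ (k*(j:ℕ)) * cw m ^ k
  have hmod : (k * (((j : ℕ) + 1) % m)) % m = (k * ((j : ℕ) + 1)) % m :=
    Nat.ModEq.mul_left k (Nat.mod_modEq _ m)
  rw [cw_pow_mod hmm, hmod, ← cw_pow_mod hmm, Nat.mul_add, pow_add, mul_one]

lemma closed (hR : IsCyclicUrn μ m j0 R) (k : ℕ) (n : ℕ) :
    ∫ ω, ucoef m k (R n ω) ∂μ
      = cw m ^ (k * (j0 : ℕ)) * ∏ i ∈ Finset.range n, (1 + cw m ^ k / ((i : ℂ) + 1)) := by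
  haveI := hR.isProb
  induction n with
  | zero =>
    rw [int_ucoef hR k 0 (sum_ae hR 0)]
    have h0 : ∀ t : Fin m, (∫ ω, R 0 ω t ∂μ) = if t = j0 then 1 else 0 := by
      intro t
      have he : (fun ω => R 0 ω t) = fun _ω => if t = j0 then (1 : ℝ) else 0 := by
        funext ω; rw [hR.init ω]
      rw [he, integral_const, probReal_univ]
      simp
    simp_rw [h0]
    have hcast : ∀ t : Fin m, (((if t = j0 then (1 : ℝ) else 0) : ℝ) : ℂ)
        = if t = j0 then (1 : ℂ) else 0 := by intro t; split <;> simp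
    simp_rw [hcast, mul_ite, mul_one, mul_zero, Finset.sum_ite_eq' Finset.univ, mem_univ, if_true]
    simp
  | succ n ih =>
    have hsn := sum_ae hR n
    have ihS : ∑ t : Fin m, cw m ^ (k * (t : ℕ)) * ((∫ ω, R n ω t ∂μ : ℝ) : ℂ)
        = cw m ^ (k * (j0 : ℕ)) * ∏ i ∈ Finset.range n, (1 + cw m ^ k / ((i : ℂ) + 1)) := by
      rw [← int_ucoef hR k n hsn]; exact ih
    rw [int_ucoef hR k (n + 1) (sum_ae hR (n + 1))]
    have hrec : ∀ t : Fin m, (∫ ω, R (n + 1) ω t ∂μ)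
        = ∫ ω, R n ω t ∂μ + ∑ j, evec m j t * ((∫ ω, R n ω j ∂μ) / (n + 1)) :=
      fun t => En_rec hR n hsn t
    simp_rw [hrec]
    push_cast
    have hsplit : ∑ t : Fin m, cw m ^ (k * (t : ℕ)) *
          (((∫ ω, R n ω t ∂μ : ℝ) : ℂ) + ∑ j, ((evec m j t : ℝ) : ℂ) *
            (((∫ ω, R n ω j ∂μ : ℝ) : ℂ) / ((n : ℂ) + 1)))
        = (∑ t : Fin m, cw m ^ (k * (t : ℕ)) * ((∫ ω, R n ω t ∂μ : ℝ) : ℂ))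
          + ∑ j : Fin m, (∑ t : Fin m, cw m ^ (k * (t : ℕ)) * ((evec m j t : ℝ) : ℂ)) *
              (((∫ ω, R n ω j ∂μ : ℝ) : ℂ) / ((n : ℂ) + 1)) := by
      simp_rw [mul_add, Finset.sum_add_distrib]
      congr 1
      simp_rw [Finset.mul_sum]
      rw [Finset.sum_comm]
      refine Finset.sum_congr rfl fun j _ => ?_
      rw [Finset.sum_mul]
      exact Finset.sum_congr rfl fun t _ => by ring
    rw [hsplit]
    simp_rw [key_sum j0.pos]
    rw [ihS, Finset.prod_range_succ]
    have : ∑ j : Fin m, cw m ^ (k * (j : ℕ)) * cw m ^ k *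
          (((∫ ω, R n ω j ∂μ : ℝ) : ℂ) / ((n : ℂ) + 1))
        = (cw m ^ k / ((n : ℂ) + 1)) *
            ∑ j : Fin m, cw m ^ (k * (j : ℕ)) * ((∫ ω, R n ω j ∂μ : ℝ) : ℂ) := by
      rw [Finset.mul_sum]
      exact Finset.sum_congr rfl fun j _ => by ring
    rw [this, ihS]
    ring

end UrnLemmas

theorem stmt5 {Ω : Type*} [MeasurableSpace Ω] (μ : Measure Ω) (m : ℕ) (hm : 2 ≤ m)
    (R : ℕ → Ω → Fin m → ℝ) (hR : IsCyclicUrn μ m ⟨0, by omega⟩ R) :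
    (∀ n : ℕ, ∀ k : ℕ, k < m → 2 * k ≠ m →
      ∫ ω, ucoef m k (R n ω) ∂μ =
        Complex.Gamma ((n : ℂ) + 1 + cw m ^ k) /
          (Complex.Gamma ((n : ℂ) + 1) * Complex.Gamma (1 + cw m ^ k))) ∧
    (2 ∣ m → ∀ n : ℕ, 1 ≤ n → ∫ ω, ucoef m (m / 2) (R n ω) ∂μ = 0) := by
  constructor
  · intro n k hk h2k
    rw [closed hR k n]
    have hj0 : ((⟨0, by omega⟩ : Fin m) : ℕ) = 0 := rfl
    rw [hj0, Nat.mul_zero, pow_zero, one_mul]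
    have hz := cwk_sum_ne hm hk h2k
    have hfac : ∀ i ∈ Finset.range n,
        (1 + cw m ^ k / ((i : ℂ) + 1)) = ((i : ℂ) + 1 + cw m ^ k) / ((i : ℂ) + 1) := by
      intro i _
      have hne : ((i : ℂ) + 1) ≠ 0 := Nat.cast_add_one_ne_zero i
      field_simp
    rw [Finset.prod_congr rfl hfac, Finset.prod_div_distrib]
    have hden : ∏ i ∈ Finset.range n, ((i : ℂ) + 1) = (n.factorial : ℂ) := by
      calc ∏ i ∈ Finset.range n, ((i : ℂ) + 1)
          = ((∏ i ∈ Finset.range n, (i + 1) : ℕ) : ℂ) := by push_cast; rfl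
        _ = (n.factorial : ℂ) := by rw [Finset.prod_range_add_one_eq_factorial]
    have hGn : Complex.Gamma ((n : ℂ) + 1) = (n.factorial : ℂ) := by
      exact_mod_cast Complex.Gamma_nat_eq_factorial n
    have hG1 : Complex.Gamma (1 + cw m ^ k) ≠ 0 := by
      apply Complex.Gamma_ne_zero
      intro j h
      exact hz j (by linear_combination h)
    have hfact_ne : ((n.factorial : ℂ)) ≠ 0 := Nat.cast_ne_zero.mpr n.factorial_ne_zero
    rw [gamma_prod _ hz n, hGn, hden]
    field_simp
  · intro h2 n hn
    rw [closed hR (m / 2) n]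
    have hj0 : ((⟨0, by omega⟩ : Fin m) : ℕ) = 0 := rfl
    rw [hj0, Nat.mul_zero, pow_zero, one_mul]
    have h0 : (0 : ℕ) ∈ Finset.range n := Finset.mem_range.mpr (by omega)
    rw [Finset.prod_eq_zero h0]
    rw [cw_half hm h2]
    norm_num


end
end

section
/- Let m ≥ 2 be even and let (R_n)_{n≥0} be a cyclic urn process with m types started with one ball of type 0. Then for every n ≥ 2, E[(u_{m/2}(R_n))²] = (n+1)/3, where u_{m/2}(R_n) = Σ_{t=0}^{m−1} (−1)^t R_{n,t} is real-valued. -/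
open MeasureTheory ProbabilityTheory Filter Complex Finset Topology

noncomputable section

namespace StmtAux

variable {Ω : Type*} [MeasurableSpace Ω]

/-- the real linear functional `S_n(ω) = ∑_t (-1)^t R_n(ω)_t`. -/
def SS (m : ℕ) (R : ℕ → Ω → Fin m → ℝ) (n : ℕ) (ω : Ω) : ℝ :=
  ∑ t : Fin m, (-1 : ℝ) ^ (t : ℕ) * R n ω t

/-- the event that the ball added at step `n` has type `(j+1) % m`. -/
def AA (m : ℕ) (R : ℕ → Ω → Fin m → ℝ) (n : ℕ) (j : Fin m) : Set Ω :=
  {ω | R (n + 1) ω =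
    fun i => R n ω i + if (i : ℕ) = ((j : ℕ) + 1) % m then 1 else 0}

lemma neg_one_pow_mod {m : ℕ} (hme : 2 ∣ m) (a : ℕ) :
    (-1 : ℝ) ^ (a % m) = (-1) ^ a := by
  conv_lhs => rw [neg_one_pow_eq_pow_mod_two]
  rw [Nat.mod_mod_of_dvd a hme, ← neg_one_pow_eq_pow_mod_two]

lemma intg {μ : Measure Ω} [IsFiniteMeasure μ] {f : Ω → ℝ}
    (hf : AEStronglyMeasurable f μ) {C : ℝ} (h : ∀ᵐ ω ∂μ, |f ω| ≤ C) :
    Integrable f μ :=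
  ⟨hf, HasFiniteIntegral.of_bounded (C := C) (by simpa [Real.norm_eq_abs] using h)⟩

section Urn

variable {μ : Measure Ω} {m : ℕ} {j0 : Fin m} {R : ℕ → Ω → Fin m → ℝ}

lemma hle (hmeas : ∀ n, Measurable (R n)) (n : ℕ) :
    urnFilt m R n ≤ ‹MeasurableSpace Ω› := by
  refine iSup₂_le fun i _ => ?_
  exact (hmeas i).comap_le

lemma measR (n : ℕ) : Measurable[urnFilt m R n] (R n) := by
  have h1 : MeasurableSpace.comap (R n) inferInstance ≤ urnFilt m R n := by
    unfold urnFilt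
    exact le_iSup₂ (f := fun (i : ℕ) (_ : i ∈ Finset.range (n + 1)) =>
      MeasurableSpace.comap (R i) inferInstance) n (Finset.self_mem_range_succ n)
  exact (measurable_iff_comap_le.2 le_rfl).mono h1 le_rfl

lemma measSS {n : ℕ} {ms : MeasurableSpace Ω} (h : Measurable[ms] (R n)) :
    Measurable[ms] (SS m R n) := by
  apply Finset.measurable_sum
  intro t _
  exact (measurable_const.mul ((measurable_pi_apply t).comp h))

lemma measAA (hR : IsCyclicUrn μ m j0 R) (n : ℕ) (j : Fin m) :
    MeasurableSet (AA m R n j) := by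
  have : AA m R n j = ⋂ i : Fin m, {ω | R (n + 1) ω i =
      R n ω i + if (i : ℕ) = ((j : ℕ) + 1) % m then 1 else 0} := by
    ext ω
    simp [AA, funext_iff, Set.mem_iInter]
  rw [this]
  refine MeasurableSet.iInter fun i => ?_
  exact measurableSet_eq_fun ((measurable_pi_apply i).comp (hR.meas (n + 1)))
    (((measurable_pi_apply i).comp (hR.meas n)).add measurable_const)

lemma disjAA (n : ℕ) {j j' : Fin m} (h : j ≠ j') :
    Disjoint (AA m R n j) (AA m R n j') := by
  rw [Set.disjoint_left]
  intro ω hj hj'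
  have hmpos : 0 < m := j.pos
  have heq : (fun i : Fin m => R n ω i + if (i : ℕ) = ((j : ℕ) + 1) % m then (1:ℝ) else 0)
      = fun i => R n ω i + if (i : ℕ) = ((j' : ℕ) + 1) % m then (1:ℝ) else 0 :=
    hj.symm.trans hj'
  have h2 := congrFun heq ⟨((j : ℕ) + 1) % m, Nat.mod_lt _ hmpos⟩
  simp only [add_right_inj, Fin.val_mk] at h2
  rw [if_pos trivial] at h2
  by_cases hc : ((j : ℕ) + 1) % m = ((j' : ℕ) + 1) % m
  · apply h
    apply Fin.ext
    have hj1 : (j : ℕ) < m := j.isLt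
    have hj2 : (j' : ℕ) < m := j'.isLt
    rcases Nat.lt_or_ge ((j : ℕ) + 1) m with h1 | h1
    · rw [Nat.mod_eq_of_lt h1] at hc
      rcases Nat.lt_or_ge ((j' : ℕ) + 1) m with h2' | h2'
      · rw [Nat.mod_eq_of_lt h2'] at hc; omega
      · have e2 : (j' : ℕ) + 1 = m := by omega
        rw [e2, Nat.mod_self] at hc; omega
    · have e1 : (j : ℕ) + 1 = m := by omega
      rw [e1, Nat.mod_self] at hc
      rcases Nat.lt_or_ge ((j' : ℕ) + 1) m with h2' | h2'
      · rw [Nat.mod_eq_of_lt h2'] at hc; omega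
      · omega
  · rw [if_neg hc] at h2
    norm_num at h2

lemma nonnegR (hR : IsCyclicUrn μ m j0 R) (n : ℕ) (ω : Ω) (t : Fin m) :
    0 ≤ R n ω t := by
  obtain ⟨z, hz⟩ := hR.natVal n ω t
  rw [hz]; positivity

/-- the master pull-out identity. -/
lemma key (hR : IsCyclicUrn μ m j0 R) (n : ℕ) (j : Fin m) {f : Ω → ℝ}
    (hf : StronglyMeasurable[urnFilt m R n] f) {C : ℝ}
    (hbf : ∀ᵐ ω ∂μ, |f ω| ≤ C)
    (hRint : Integrable (fun ω => f ω * (R n ω j / (n + 1))) μ) :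
    ∫ ω, f ω * Set.indicator (AA m R n j) (fun _ => (1 : ℝ)) ω ∂μ
      = ∫ ω, f ω * (R n ω j / (n + 1)) ∂μ := by
  haveI := hR.isProb
  have hlem : urnFilt m R n ≤ ‹MeasurableSpace Ω› := hle hR.meas n
  haveI : SigmaFinite (μ.trim hlem) := by
    haveI : IsFiniteMeasure (μ.trim hlem) := isFiniteMeasure_trim _
    infer_instance
  set g : Ω → ℝ := Set.indicator (AA m R n j) (fun _ => (1 : ℝ)) with hgdef
  have hgint : Integrable g μ := (integrable_const (1 : ℝ)).indicator (measAA hR n j)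
  have hgbd : ∀ ω, |g ω| ≤ 1 := by
    intro ω
    by_cases hω : ω ∈ AA m R n j
    · rw [hgdef, Set.indicator_of_mem hω]; norm_num
    · rw [hgdef, Set.indicator_of_notMem hω]; norm_num
  have hfmeas : AEStronglyMeasurable f μ := (hf.mono hlem).aestronglyMeasurable
  have hfg : Integrable (f * g) μ := by
    refine intg (hfmeas.mul hgint.1) (C := C) ?_
    filter_upwards [hbf] with ω hω
    calc |f ω * g ω| = |f ω| * |g ω| := abs_mul _ _
      _ ≤ C * 1 := mul_le_mul hω (hgbd ω) (abs_nonneg _) ((abs_nonneg _).trans hω)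
      _ = C := mul_one C
  have hcx := condExp_mul_of_stronglyMeasurable_left hf hfg hgint
  have hstep : μ[g | urnFilt m R n] =ᵐ[μ] fun ω => R n ω j / (n + 1) := hR.step n j
  calc ∫ ω, f ω * g ω ∂μ = ∫ ω, (μ[f * g | urnFilt m R n]) ω ∂μ :=
        (integral_condExp (f := f * g) hlem).symm
    _ = ∫ ω, f ω * (R n ω j / (n + 1)) ∂μ := by
        refine integral_congr_ae ?_
        filter_upwards [hcx, hstep] with ω h1 h2
        rw [h1, Pi.mul_apply, h2]

lemma hbd' (hR : IsCyclicUrn μ m j0 R) (n : ℕ)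
    (h : ∀ᵐ ω ∂μ, ∑ t : Fin m, R n ω t = n + 1) :
    ∀ᵐ ω ∂μ, ∀ t : Fin m, |R n ω t| ≤ n + 1 := by
  filter_upwards [h] with ω hω t
  rw [_root_.abs_of_nonneg (nonnegR hR n ω t)]
  calc R n ω t ≤ ∑ s : Fin m, R n ω s :=
        Finset.single_le_sum (fun s _ => nonnegR hR n ω s) (Finset.mem_univ t)
    _ = n + 1 := hω

lemma ae_mem_union (hR : IsCyclicUrn μ m j0 R) (n : ℕ)
    (h : ∀ᵐ ω ∂μ, ∑ t : Fin m, R n ω t = n + 1) :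
    ∀ᵐ ω ∂μ, ∃ j : Fin m, ω ∈ AA m R n j := by
  haveI := hR.isProb
  have hlem : urnFilt m R n ≤ ‹MeasurableSpace Ω› := hle hR.meas n
  haveI : SigmaFinite (μ.trim hlem) := by
    haveI : IsFiniteMeasure (μ.trim hlem) := isFiniteMeasure_trim _
    infer_instance
  have hU : MeasurableSet (⋃ j, AA m R n j) := MeasurableSet.iUnion fun j => measAA hR n j
  have hμj : ∀ j : Fin m, (μ (AA m R n j)).toReal = ∫ ω, R n ω j / (n + 1) ∂μ := by
    intro j
    have hi : Set.indicator (AA m R n j) (fun _ => (1 : ℝ)) = Set.indicator (AA m R n j) 1 :=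
      rfl
    rw [← measureReal_def, ← integral_indicator_one (measAA hR n j), ← hi,
      ← integral_condExp (f := Set.indicator (AA m R n j) (fun _ => (1 : ℝ))) hlem]
    exact integral_congr_ae (hR.step n j)
  have hint : ∀ j : Fin m, Integrable (fun ω => R n ω j / (n + 1)) μ := by
    intro j
    refine intg (((measurable_pi_apply j).comp (hR.meas n)).div_const _).aestronglyMeasurable
      (C := 1) ?_
    filter_upwards [hbd' hR n h] with ω hω
    rw [abs_div, _root_.abs_of_nonneg (by positivity : (0 : ℝ) ≤ (n : ℝ) + 1),
      div_le_one (by positivity)]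
    simpa using hω j
  have hsum : ∑ j : Fin m, (μ (AA m R n j)).toReal = 1 := by
    calc ∑ j : Fin m, (μ (AA m R n j)).toReal
        = ∑ j : Fin m, ∫ ω, R n ω j / (n + 1) ∂μ := Finset.sum_congr rfl fun j _ => hμj j
      _ = ∫ ω, ∑ j : Fin m, R n ω j / (n + 1) ∂μ :=
          (integral_finset_sum _ fun j _ => hint j).symm
      _ = ∫ _ω, (1 : ℝ) ∂μ := by
          refine integral_congr_ae ?_
          filter_upwards [h] with ω hω
          rw [← Finset.sum_div, hω]
          field_simp
      _ = 1 := by simp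
  have hμU : μ (⋃ j, AA m R n j) = 1 := by
    have hd : Pairwise (Function.onFun Disjoint fun j : Fin m => AA m R n j) :=
      fun j j' hjj' => disjAA n hjj'
    rw [measure_iUnion hd fun j => measAA hR n j, tsum_fintype,
      ← ENNReal.toReal_eq_one_iff, ENNReal.toReal_sum fun j _ => measure_ne_top μ _]
    exact hsum
  have hae : ∀ᵐ ω ∂μ, ω ∈ ⋃ j, AA m R n j := by
    rw [MeasureTheory.ae_iff]
    have hc : {ω | ¬ ω ∈ ⋃ j, AA m R n j} = (⋃ j, AA m R n j)ᶜ := rfl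
    rw [hc, measure_compl hU (measure_ne_top μ _), hμU, measure_univ, tsub_self]
  filter_upwards [hae] with ω hω
  simpa using hω

lemma htot (hR : IsCyclicUrn μ m j0 R) (n : ℕ) :
    ∀ᵐ ω ∂μ, ∑ t : Fin m, R n ω t = n + 1 := by
  haveI := hR.isProb
  induction n with
  | zero =>
    refine Filter.Eventually.of_forall fun ω => ?_
    rw [hR.init ω]
    simp
  | succ n ih =>
    filter_upwards [ae_mem_union hR n ih, ih] with ω hω hω2
    obtain ⟨j, hj⟩ := hω
    have hjfun : R (n + 1) ω =
        fun i => R n ω i + if (i : ℕ) = ((j : ℕ) + 1) % m then 1 else 0 := hj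
    have hc : ((j : ℕ) + 1) % m < m := Nat.mod_lt _ j.pos
    have hone : ∑ t : Fin m, (if (t : ℕ) = ((j : ℕ) + 1) % m then (1 : ℝ) else 0) = 1 := by
      have hrw : ∀ t : Fin m, ((t : ℕ) = ((j : ℕ) + 1) % m) = (t = ⟨_, hc⟩) := fun t => by
        simp [Fin.ext_iff]
      simp_rw [hrw]
      simp
    calc ∑ t : Fin m, R (n + 1) ω t
        = ∑ t : Fin m, (R n ω t + if (t : ℕ) = ((j : ℕ) + 1) % m then 1 else 0) := by
          refine Finset.sum_congr rfl fun t _ => ?_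
          rw [hjfun]
      _ = (n + 1 : ℝ) + 1 := by rw [Finset.sum_add_distrib, hω2, hone]
      _ = ((n + 1 : ℕ) : ℝ) + 1 := by push_cast; ring

lemma hbd (hR : IsCyclicUrn μ m j0 R) (n : ℕ) :
    ∀ᵐ ω ∂μ, ∀ t : Fin m, |R n ω t| ≤ n + 1 :=
  hbd' hR n (htot hR n)

lemma rec_step (hR : IsCyclicUrn μ m j0 R) (hme : 2 ∣ m) (n : ℕ) :
    ∫ ω, SS m R (n + 1) ω ^ 2 ∂μ
      = ∫ ω, SS m R n ω ^ 2 ∂μ + 1 - 2 * (∫ ω, SS m R n ω ^ 2 ∂μ) / (n + 1) := by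
  haveI := hR.isProb
  have hSme : StronglyMeasurable[urnFilt m R n] (SS m R n) :=
    (measSS (measR n)).stronglyMeasurable
  have hSmeas : Measurable (SS m R n) := measSS (hR.meas n)
  set B : ℝ := (m : ℝ) * ((n : ℝ) + 1) with hBdef
  have hSbd : ∀ᵐ ω ∂μ, |SS m R n ω| ≤ B := by
    filter_upwards [hbd hR n] with ω hω
    calc |SS m R n ω| ≤ ∑ t : Fin m, |(-1 : ℝ) ^ (t : ℕ) * R n ω t| :=
          Finset.abs_sum_le_sum_abs _ _
      _ ≤ ∑ _t : Fin m, ((n : ℝ) + 1) := Finset.sum_le_sum fun t _ => by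
          rw [abs_mul, _root_.abs_pow, abs_neg, abs_one, one_pow, one_mul]
          exact hω t
      _ = B := by
          rw [Finset.sum_const, Finset.card_univ, Fintype.card_fin, nsmul_eq_mul, hBdef]
  have hae : ∀ᵐ ω ∂μ, SS m R (n + 1) ω ^ 2
      = ∑ j : Fin m, (SS m R n ω + (-1 : ℝ) ^ ((j : ℕ) + 1)) ^ 2
          * Set.indicator (AA m R n j) (fun _ => (1 : ℝ)) ω := by
    filter_upwards [ae_mem_union hR n (htot hR n)] with ω hω
    obtain ⟨j0', hj0⟩ := hω
    rw [Finset.sum_eq_single j0']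
    · rw [Set.indicator_of_mem hj0, mul_one]
      have hjfun : R (n + 1) ω =
          fun i => R n ω i + if (i : ℕ) = ((j0' : ℕ) + 1) % m then 1 else 0 := hj0
      have hc : ((j0' : ℕ) + 1) % m < m := Nat.mod_lt _ j0'.pos
      have hstep : SS m R (n + 1) ω = SS m R n ω + (-1 : ℝ) ^ ((j0' : ℕ) + 1) := by
        have h1 : SS m R (n + 1) ω = ∑ t : Fin m, ((-1 : ℝ) ^ (t : ℕ) * R n ω t
            + (-1 : ℝ) ^ (t : ℕ) * (if (t : ℕ) = ((j0' : ℕ) + 1) % m then 1 else 0)) := by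
          refine Finset.sum_congr rfl fun t _ => ?_
          show (-1 : ℝ) ^ (t : ℕ) * R (n + 1) ω t = _
          rw [hjfun]
          ring
        rw [h1, Finset.sum_add_distrib]
        congr 1
        have hrw : ∀ t : Fin m,
            ((-1 : ℝ) ^ (t : ℕ) * (if (t : ℕ) = ((j0' : ℕ) + 1) % m then (1 : ℝ) else 0))
            = (if t = (⟨((j0' : ℕ) + 1) % m, hc⟩ : Fin m) then (-1 : ℝ) ^ (t : ℕ) else 0) :=
          fun t => by simp [Fin.ext_iff, mul_ite]
        simp_rw [hrw]
        rw [Finset.sum_ite_eq' Finset.univ (⟨((j0' : ℕ) + 1) % m, hc⟩ : Fin m)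
          (fun t : Fin m => (-1 : ℝ) ^ (t : ℕ))]
        simp [neg_one_pow_mod hme]
      rw [hstep]
    · intro j _ hjne
      rw [Set.indicator_of_notMem, mul_zero]
      intro hmem
      exact (Set.disjoint_left.mp (disjAA n hjne) hmem) hj0
    · intro hj; exact absurd (Finset.mem_univ j0') hj
  have hindmeas : ∀ j : Fin m, Measurable (fun ω =>
      (SS m R n ω + (-1 : ℝ) ^ ((j : ℕ) + 1)) ^ 2) :=
    fun j => ((hSmeas.add_const _).pow_const 2)
  have hgbd : ∀ j : Fin m, ∀ᵐ ω ∂μ,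
      |(SS m R n ω + (-1 : ℝ) ^ ((j : ℕ) + 1)) ^ 2| ≤ (B + 1) ^ 2 := by
    intro j
    filter_upwards [hSbd] with ω hω
    have h1 : |SS m R n ω + (-1 : ℝ) ^ ((j : ℕ) + 1)| ≤ B + 1 := by
      calc |SS m R n ω + (-1 : ℝ) ^ ((j : ℕ) + 1)|
          ≤ |SS m R n ω| + |(-1 : ℝ) ^ ((j : ℕ) + 1)| := abs_add_le _ _
        _ ≤ B + 1 := by
            rw [_root_.abs_pow, abs_neg, abs_one, one_pow]
            exact add_le_add_left hω 1
    calc |(SS m R n ω + (-1 : ℝ) ^ ((j : ℕ) + 1)) ^ 2|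
        = |SS m R n ω + (-1 : ℝ) ^ ((j : ℕ) + 1)| ^ 2 := by rw [_root_.abs_pow]
      _ ≤ (B + 1) ^ 2 := pow_le_pow_left₀ (abs_nonneg _) h1 2
  have hindbd1 : ∀ j : Fin m, ∀ ω : Ω,
      |Set.indicator (AA m R n j) (fun _ => (1 : ℝ)) ω| ≤ 1 := by
    intro j ω
    by_cases hmem : ω ∈ AA m R n j
    · rw [Set.indicator_of_mem hmem]; norm_num
    · rw [Set.indicator_of_notMem hmem]; norm_num
  have hindint : ∀ j : Fin m, Integrable (fun ω =>
      (SS m R n ω + (-1 : ℝ) ^ ((j : ℕ) + 1)) ^ 2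
        * Set.indicator (AA m R n j) (fun _ => (1 : ℝ)) ω) μ := by
    intro j
    refine intg (((hindmeas j).aestronglyMeasurable).mul
      ((integrable_const (1 : ℝ)).indicator (measAA hR n j)).1) (C := (B + 1) ^ 2 * 1) ?_
    filter_upwards [hgbd j] with ω hω
    rw [abs_mul]
    exact mul_le_mul hω (hindbd1 j ω) (abs_nonneg _) (le_trans (abs_nonneg _) hω)
  have hRjbd : ∀ j : Fin m, ∀ᵐ ω ∂μ, |R n ω j / ((n : ℝ) + 1)| ≤ 1 := by
    intro j
    filter_upwards [hbd hR n] with ω hω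
    rw [abs_div, _root_.abs_of_nonneg (by positivity : (0 : ℝ) ≤ (n : ℝ) + 1),
      div_le_one (by positivity)]
    exact hω j
  have hterm2int : ∀ j : Fin m, Integrable (fun ω =>
      (SS m R n ω + (-1 : ℝ) ^ ((j : ℕ) + 1)) ^ 2 * (R n ω j / ((n : ℝ) + 1))) μ := by
    intro j
    refine intg ((hindmeas j).aestronglyMeasurable.mul
      ((((measurable_pi_apply j).comp (hR.meas n)).div_const _).aestronglyMeasurable))
      (C := (B + 1) ^ 2 * 1) ?_
    filter_upwards [hgbd j, hRjbd j] with ω h1 h2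
    rw [abs_mul]
    exact mul_le_mul h1 h2 (abs_nonneg _) (le_trans (abs_nonneg _) h1)
  have hterm : ∀ j : Fin m,
      ∫ ω, (SS m R n ω + (-1 : ℝ) ^ ((j : ℕ) + 1)) ^ 2
          * Set.indicator (AA m R n j) (fun _ => (1 : ℝ)) ω ∂μ
        = ∫ ω, (SS m R n ω + (-1 : ℝ) ^ ((j : ℕ) + 1)) ^ 2 * (R n ω j / ((n : ℝ) + 1)) ∂μ := by
    intro j
    refine key hR n j ?_ (C := (B + 1) ^ 2) (hgbd j) (hterm2int j)
    exact (hSme.add stronglyMeasurable_const).pow 2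
  have hS2int : Integrable (fun ω => SS m R n ω ^ 2) μ := by
    refine intg ((hSmeas.pow_const 2).aestronglyMeasurable) (C := B ^ 2) ?_
    filter_upwards [hSbd] with ω hω
    rw [_root_.abs_pow]
    exact pow_le_pow_left₀ (abs_nonneg _) hω 2
  have hintegrand : ∀ᵐ ω ∂μ, (∑ j : Fin m,
      (SS m R n ω + (-1 : ℝ) ^ ((j : ℕ) + 1)) ^ 2 * (R n ω j / ((n : ℝ) + 1)))
      = SS m R n ω ^ 2 + 1 - 2 / ((n : ℝ) + 1) * SS m R n ω ^ 2 := by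
    filter_upwards [htot hR n] with ω hω
    have hne : ((n : ℝ) + 1) ≠ 0 := by positivity
    have hcR : ∑ j : Fin m, (-1 : ℝ) ^ ((j : ℕ) + 1) * R n ω j = - SS m R n ω := by
      rw [SS, ← Finset.sum_neg_distrib]
      refine Finset.sum_congr rfl fun j _ => ?_
      rw [pow_succ]
      ring
    have hterm3 : ∀ j : Fin m,
        (SS m R n ω + (-1 : ℝ) ^ ((j : ℕ) + 1)) ^ 2 * (R n ω j / ((n : ℝ) + 1))
        = (SS m R n ω ^ 2 * R n ω j
            + 2 * SS m R n ω * ((-1 : ℝ) ^ ((j : ℕ) + 1) * R n ω j)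
            + R n ω j) / ((n : ℝ) + 1) := by
      intro j
      have hc2 : ((-1 : ℝ) ^ ((j : ℕ) + 1)) ^ 2 = 1 := by
        rw [← pow_mul, mul_comm, pow_mul]
        norm_num
      calc (SS m R n ω + (-1 : ℝ) ^ ((j : ℕ) + 1)) ^ 2 * (R n ω j / ((n : ℝ) + 1))
          = (SS m R n ω ^ 2 * R n ω j
              + 2 * SS m R n ω * ((-1 : ℝ) ^ ((j : ℕ) + 1) * R n ω j)
              + ((-1 : ℝ) ^ ((j : ℕ) + 1)) ^ 2 * R n ω j) / ((n : ℝ) + 1) := by ring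
        _ = _ := by rw [hc2, one_mul]
    calc (∑ j : Fin m, (SS m R n ω + (-1 : ℝ) ^ ((j : ℕ) + 1)) ^ 2 * (R n ω j / ((n : ℝ) + 1)))
        = ∑ j : Fin m, (SS m R n ω ^ 2 * R n ω j
            + 2 * SS m R n ω * ((-1 : ℝ) ^ ((j : ℕ) + 1) * R n ω j)
            + R n ω j) / ((n : ℝ) + 1) := Finset.sum_congr rfl fun j _ => hterm3 j
      _ = (SS m R n ω ^ 2 * (∑ j : Fin m, R n ω j)
            + 2 * SS m R n ω * (∑ j : Fin m, (-1 : ℝ) ^ ((j : ℕ) + 1) * R n ω j)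
            + ∑ j : Fin m, R n ω j) / ((n : ℝ) + 1) := by
          rw [← Finset.sum_div]
          congr 1
          rw [Finset.sum_add_distrib, Finset.sum_add_distrib, ← Finset.mul_sum,
            ← Finset.mul_sum]
      _ = (SS m R n ω ^ 2 * ((n : ℝ) + 1) + 2 * SS m R n ω * (- SS m R n ω)
            + ((n : ℝ) + 1)) / ((n : ℝ) + 1) := by rw [hω, hcR]
      _ = SS m R n ω ^ 2 + 1 - 2 / ((n : ℝ) + 1) * SS m R n ω ^ 2 := by
          field_simp
          ring
  calc ∫ ω, SS m R (n + 1) ω ^ 2 ∂μ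
      = ∫ ω, ∑ j : Fin m, (SS m R n ω + (-1 : ℝ) ^ ((j : ℕ) + 1)) ^ 2
          * Set.indicator (AA m R n j) (fun _ => (1 : ℝ)) ω ∂μ := integral_congr_ae hae
    _ = ∑ j : Fin m, ∫ ω, (SS m R n ω + (-1 : ℝ) ^ ((j : ℕ) + 1)) ^ 2
          * Set.indicator (AA m R n j) (fun _ => (1 : ℝ)) ω ∂μ :=
        integral_finset_sum _ (fun j _ => hindint j)
    _ = ∑ j : Fin m, ∫ ω, (SS m R n ω + (-1 : ℝ) ^ ((j : ℕ) + 1)) ^ 2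
          * (R n ω j / ((n : ℝ) + 1)) ∂μ := Finset.sum_congr rfl fun j _ => hterm j
    _ = ∫ ω, ∑ j : Fin m, (SS m R n ω + (-1 : ℝ) ^ ((j : ℕ) + 1)) ^ 2
          * (R n ω j / ((n : ℝ) + 1)) ∂μ :=
        (integral_finset_sum _ (fun j _ => hterm2int j)).symm
    _ = ∫ ω, (SS m R n ω ^ 2 + 1 - 2 / ((n : ℝ) + 1) * SS m R n ω ^ 2) ∂μ :=
        integral_congr_ae hintegrand
    _ = ∫ ω, SS m R n ω ^ 2 ∂μ + 1 - 2 * (∫ ω, SS m R n ω ^ 2 ∂μ) / (n + 1) := by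
        have hf1 : Integrable (fun ω => SS m R n ω ^ 2 + 1) μ :=
          hS2int.add (integrable_const 1)
        have hf2 : Integrable (fun ω => 2 / ((n : ℝ) + 1) * SS m R n ω ^ 2) μ :=
          hS2int.const_mul _
        rw [integral_sub hf1 hf2, integral_add hS2int (integrable_const 1),
          MeasureTheory.integral_const_mul, integral_const]
        simp only [measureReal_def, measure_univ, ENNReal.toReal_one, smul_eq_mul, one_mul, mul_one]
        ring

lemma a_zero (hR : IsCyclicUrn μ m j0 R) :
    ∫ ω, SS m R 0 ω ^ 2 ∂μ = 1 := by
  haveI := hR.isProb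
  have h : ∀ ω, SS m R 0 ω ^ 2 = 1 := by
    intro ω
    have hini := hR.init ω
    have hS : SS m R 0 ω = (-1 : ℝ) ^ (j0 : ℕ) := by
      simp only [SS, hini]
      simp [mul_ite]
    rw [hS, ← pow_mul, mul_comm, pow_mul]
    norm_num
  calc ∫ ω, SS m R 0 ω ^ 2 ∂μ = ∫ _ω, (1 : ℝ) ∂μ :=
        integral_congr_ae (Filter.Eventually.of_forall h)
    _ = 1 := by simp

lemma a_formula (hR : IsCyclicUrn μ m j0 R) (hme : 2 ∣ m) (n : ℕ) (hn : 2 ≤ n) :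
    ∫ ω, SS m R n ω ^ 2 ∂μ = ((n : ℝ) + 1) / 3 := by
  induction n, hn using Nat.le_induction with
  | base =>
    have h0 := a_zero hR
    have h1 := rec_step hR hme 0
    have h2 := rec_step hR hme 1
    rw [h0] at h1
    norm_num at h1
    rw [h2, h1]
    norm_num
  | succ n hn ih =>
    rw [rec_step hR hme n, ih]
    have hne : ((n : ℝ) + 1) ≠ 0 := by positivity
    push_cast
    field_simp
    ring

end Urn

lemma cw_pow_half {m : ℕ} (hm : 2 ≤ m) (hme : 2 ∣ m) : cw m ^ (m / 2) = -1 := by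
  have hm0 : (m : ℂ) ≠ 0 := Nat.cast_ne_zero.2 (by omega)
  rw [cw, ← Complex.exp_nat_mul]
  have h2 : ((m / 2 : ℕ) : ℂ) * 2 = (m : ℂ) := by
    exact_mod_cast congrArg (Nat.cast (R := ℂ)) (Nat.div_mul_cancel hme)
  have : ((m / 2 : ℕ) : ℂ) * (2 * Real.pi * Complex.I / m) = Real.pi * Complex.I := by
    calc ((m / 2 : ℕ) : ℂ) * (2 * Real.pi * Complex.I / m)
        = (((m / 2 : ℕ) : ℂ) * 2) * (Real.pi * Complex.I) / m := by ring
      _ = (m : ℂ) * (Real.pi * Complex.I) / m := by rw [h2]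
      _ = Real.pi * Complex.I := by field_simp
  rw [this, Complex.exp_pi_mul_I]

lemma ucoef_half {m : ℕ} (hm : 2 ≤ m) (hme : 2 ∣ m) (w : Fin m → ℝ) :
    ucoef m (m / 2) w = ((∑ t : Fin m, (-1 : ℝ) ^ (t : ℕ) * w t : ℝ) : ℂ) := by
  rw [ucoef]
  push_cast
  refine Finset.sum_congr rfl fun t _ => ?_
  rw [pow_mul, cw_pow_half hm hme]

end StmtAux


theorem stmt8 {Ω : Type*} [MeasurableSpace Ω] (μ : Measure Ω) (m : ℕ) (hm : 2 ≤ m)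
    (hme : 2 ∣ m) (R : ℕ → Ω → Fin m → ℝ) (hR : IsCyclicUrn μ m ⟨0, by omega⟩ R)
    (n : ℕ) (hn : 2 ≤ n) :
    (∀ ω, (ucoef m (m / 2) (R n ω)).im = 0 ∧
      (ucoef m (m / 2) (R n ω)).re = ∑ t : Fin m, (-1 : ℝ) ^ (t : ℕ) * R n ω t) ∧
    ∫ ω, ((ucoef m (m / 2) (R n ω)).re) ^ 2 ∂μ = ((n : ℝ) + 1) / 3 := by
  have h1 : ∀ ω', ucoef m (m / 2) (R n ω') = ((StmtAux.SS m R n ω' : ℝ) : ℂ) :=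
    fun ω' => StmtAux.ucoef_half hm hme (R n ω')
  have h2 : ∀ ω', ((ucoef m (m / 2) (R n ω')).re) = StmtAux.SS m R n ω' :=
    fun ω' => by rw [h1]; exact Complex.ofReal_re _
  constructor
  · intro ω'
    refine ⟨by rw [h1]; exact Complex.ofReal_im _, ?_⟩
    rw [h2]; rfl
  · simp_rw [h2]
    exact StmtAux.a_formula hR hme n hn

end
end
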